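/- Let C(n) be the number of coprime permutations of {1,…,n}. Then C(2n+1) ≥ 2·C(2n−2) for all n ≥ 2. -/

import Mathlib

/-- The number of coprime permutations of `{1,…,n}`: permutations `σ` of `{1,…,n}`
(encoded as permutations of `Fin n` via `j ↦ j+1`) with `gcd(j, σ j) = 1` for all `j`. -/
def C (n : ℕ) : ℕ :=
  Fintype.card {σ : Equiv.Perm (Fin n) // ∀ j, Nat.gcd (j.val + 1) ((σ j).val + 1) = 1}

namespace CoprimeAux

def ext (m : ℕ) (σ : Equiv.Perm (Fin m)) (τ : Equiv.Perm (Fin 3)) :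
    Equiv.Perm (Fin (m + 3)) :=
  finSumFinEquiv.permCongr (Equiv.sumCongr σ τ)

lemma ext_castAdd (m : ℕ) (σ : Equiv.Perm (Fin m)) (τ : Equiv.Perm (Fin 3)) (i : Fin m) :
    ext m σ τ (Fin.castAdd 3 i) = Fin.castAdd 3 (σ i) := by
  simp [ext, Equiv.permCongr_apply]

lemma ext_natAdd (m : ℕ) (σ : Equiv.Perm (Fin m)) (τ : Equiv.Perm (Fin 3)) (i : Fin 3) :
    ext m σ τ (Fin.natAdd m i) = Fin.natAdd m (τ i) := by
  simp [ext, Equiv.permCongr_apply]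

lemma gcd_succ_succ (m : ℕ) : Nat.gcd (m + 1) (m + 2) = 1 := by
  have h : Nat.gcd (m + 1) (m + 2) ∣ 1 := by
    have := Nat.dvd_sub (Nat.gcd_dvd_right (m+1) (m+2)) (Nat.gcd_dvd_left (m+1) (m+2))
    simpa using this
  exact Nat.dvd_one.mp h

lemma gcd_odd (m : ℕ) (hm : Even m) : Nat.gcd (m + 1) (m + 3) = 1 := by
  have hd : Nat.gcd (m + 1) (m + 3) ∣ 2 := by
    have := Nat.dvd_sub (Nat.gcd_dvd_right (m+1) (m+3)) (Nat.gcd_dvd_left (m+1) (m+3))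
    simpa using this
  rcases (Nat.dvd_prime Nat.prime_two).mp hd with h | h
  · exact h
  · exfalso
    have h2 : 2 ∣ m + 1 := h ▸ Nat.gcd_dvd_left _ _
    obtain ⟨k, rfl⟩ := hm
    omega

def τt : Bool → Equiv.Perm (Fin 3)
  | true => finRotate 3
  | false => (finRotate 3)⁻¹

lemma key (m : ℕ) (hm : Even m) : 2 * C m ≤ C (m + 3) := by
  classical
  set S := {σ : Equiv.Perm (Fin m) // ∀ j, Nat.gcd (j.val + 1) ((σ j).val + 1) = 1}
  set T := {σ : Equiv.Perm (Fin (m+3)) // ∀ j, Nat.gcd (j.val + 1) ((σ j).val + 1) = 1}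
  have hmap : ∀ (b : Bool) (σ : S), ∀ j, Nat.gcd (j.val + 1)
      (((ext m σ.1 (τt b)) j).val + 1) = 1 := by
    rintro b ⟨σ, hσ⟩ j
    refine Fin.addCases (fun i => ?_) (fun i => ?_) j
    · rw [ext_castAdd]
      simpa using hσ i
    · rw [ext_natAdd]
      simp only [Fin.coe_natAdd]
      cases b <;> fin_cases i <;> simp only [τt]
      · -- b = false, i = 0 : τ 0 = 2, gcd (m+1) (m+3)
        have hv : (((finRotate 3)⁻¹ : Equiv.Perm (Fin 3)) 0).val = 2 := by decide
        simp only [show (⟨0, by omega⟩ : Fin 3) = 0 from rfl, hv]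
        simpa using gcd_odd m hm
      · -- b = false, i = 1 : τ 1 = 0, gcd (m+2) (m+1)
        have hv : (((finRotate 3)⁻¹ : Equiv.Perm (Fin 3)) 1).val = 0 := by decide
        simp only [show (⟨1, by omega⟩ : Fin 3) = 1 from rfl, hv]
        rw [Nat.gcd_comm]
        simpa using gcd_succ_succ m
      · -- b = false, i = 2 : τ 2 = 1, gcd (m+3) (m+2)
        have hv : (((finRotate 3)⁻¹ : Equiv.Perm (Fin 3)) 2).val = 1 := by decide
        simp only [show (⟨2, by omega⟩ : Fin 3) = 2 from rfl, hv]
        rw [Nat.gcd_comm]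
        simpa [Nat.add_assoc] using gcd_succ_succ (m+1)
      · -- b = true, i = 0 : τ 0 = 1, gcd (m+1) (m+2)
        have hv : ((finRotate 3 : Equiv.Perm (Fin 3)) 0).val = 1 := by decide
        simp only [show (⟨0, by omega⟩ : Fin 3) = 0 from rfl, hv]
        simpa using gcd_succ_succ m
      · -- b = true, i = 1 : τ 1 = 2, gcd (m+2) (m+3)
        have hv : ((finRotate 3 : Equiv.Perm (Fin 3)) 1).val = 2 := by decide
        simp only [show (⟨1, by omega⟩ : Fin 3) = 1 from rfl, hv]
        simpa [Nat.add_assoc] using gcd_succ_succ (m+1)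
      · -- b = true, i = 2 : τ 2 = 0, gcd (m+3) (m+1)
        have hv : ((finRotate 3 : Equiv.Perm (Fin 3)) 2).val = 0 := by decide
        simp only [show (⟨2, by omega⟩ : Fin 3) = 2 from rfl, hv]
        rw [Nat.gcd_comm]
        simpa using gcd_odd m hm
  let F : Bool × S → T := fun p => ⟨ext m p.2.1 (τt p.1), hmap p.1 p.2⟩
  have hF : Function.Injective F := by
    rintro ⟨b, σ, hσ⟩ ⟨b', σ', hσ'⟩ h
    have heq : ext m σ (τt b) = ext m σ' (τt b') := congrArg Subtype.val h
    have hb : b = b' := by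
      have h0 := congrFun (congrArg (fun e => (e : Equiv.Perm (Fin (m+3))) ∘ id)
        heq) (Fin.natAdd m 0)
      simp only [Function.comp, id] at h0
      rw [ext_natAdd, ext_natAdd] at h0
      have hval : (τt b 0 : Fin 3).val = (τt b' 0).val := by
        have := congrArg Fin.val h0
        simpa using this
      have : τt b 0 = τt b' 0 := Fin.ext hval
      cases b <;> cases b' <;> simp only [τt] at this ⊢ <;> revert this <;> decide
    subst hb
    have hσeq : σ = σ' := by
      ext i
      have h0 := congrFun (congrArg (fun e => (e : Equiv.Perm (Fin (m+3))) ∘ id)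
        heq) (Fin.castAdd 3 i)
      simp only [Function.comp, id] at h0
      rw [ext_castAdd, ext_castAdd] at h0
      have hval : ((σ i : Fin m)).val = (σ' i).val := by
        have := congrArg Fin.val h0
        simpa using this
      exact hval
    simp [hσeq]
  calc 2 * C m = Fintype.card (Bool × S) := by simp [C, Fintype.card_prod, S, two_mul]
    _ ≤ Fintype.card T := Fintype.card_le_of_injective F hF
    _ = C (m + 3) := rfl

end CoprimeAux

theorem stmt_6 (n : ℕ) (hn : 2 ≤ n) : 2 * C (2 * n - 2) ≤ C (2 * n + 1) := by
  obtain ⟨k, rfl⟩ : ∃ k, n = k + 2 := ⟨n - 2, by omega⟩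
  have h1 : 2 * (k + 2) - 2 = 2 * k + 2 := by omega
  have h2 : 2 * (k + 2) + 1 = (2 * k + 2) + 3 := by omega
  rw [h1, h2]
  exact CoprimeAux.key (2 * k + 2) ⟨k + 1, by ring⟩
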